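/- arXiv:2507.13327 — 3 statements merged into one kernel-verified Lean document; each statement's English description precedes it below -/
import Mathlib

section
/- Let 1 ≤ t < k and 2k ≤ n, and fix a t-element subset T of {1,…,n}. Let D_T be the set of all k-element subsets of {1,…,n} that contain T. Then ∑_{S∈D_T} φ(S) = 0 for every eigenvector φ of the graph Laplacian of the Johnson graph J(n,k) whose eigenvalue is strictly greater than t(n+1−t); that is, D_T averages all eigenvectors from the eigenspaces with eigenvalue λ_ℓ = ℓ(n+1−ℓ) for ℓ > t. -/
open Finset Matrix

/-- The Johnson graph `J(n,k)`: vertices are the `k`-element subsets of `{1,…,n}`,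
two distinct vertices adjacent exactly when their intersection has `k−1` elements. -/
def johnsonGraph (n k : ℕ) : SimpleGraph {S : Finset (Fin n) // S.card = k} where
  Adj S T := S ≠ T ∧ (S.1 ∩ T.1).card = k - 1
  symm := ⟨fun S T h => ⟨Ne.symm h.1, by rw [Finset.inter_comm]; exact h.2⟩⟩
  loopless := ⟨fun S h => h.1 rfl⟩

instance (n k : ℕ) : DecidableRel (johnsonGraph n k).Adj :=
  fun S T => inferInstanceAs (Decidable (S ≠ T ∧ (S.1 ∩ T.1).card = k - 1))

namespace EKRAux
variable {n k : ℕ}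

lemma pair_card_eq (W : {S : Finset (Fin n) // S.card = k}) (T : Finset (Fin n)) :
    ((W.1 ×ˢ W.1ᶜ).filter fun p => T ⊆ insert p.2 (W.1.erase p.1)).card
      = (Finset.univ.filter fun S : {S : Finset (Fin n) // S.card = k} =>
          T ⊆ S.1 ∧ (johnsonGraph n k).Adj S W).card := by
  have hcard : ∀ p : Fin n × Fin n, p.1 ∈ W.1 → p.2 ∉ W.1 →
      (insert p.2 (W.1.erase p.1)).card = k := by
    intro p h1 h2
    rw [Finset.card_insert_of_notMem (fun h => h2 (Finset.erase_subset _ _ h)),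
      Finset.card_erase_of_mem h1, W.2]
    have : 1 ≤ k := W.2 ▸ Finset.card_pos.mpr ⟨p.1, h1⟩
    omega
  refine Finset.card_bij (fun p hp => ⟨insert p.2 (W.1.erase p.1), by
    simp only [Finset.mem_filter, Finset.mem_product, Finset.mem_compl] at hp
    exact hcard p hp.1.1 hp.1.2⟩) ?_ ?_ ?_
  · intro p hp
    simp only [Finset.mem_filter, Finset.mem_product, Finset.mem_compl] at hp
    obtain ⟨⟨h1, h2⟩, h3⟩ := hp
    simp only [Finset.mem_filter, Finset.mem_univ, true_and]
    refine ⟨h3, ?_, ?_⟩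
    · intro hEq
      apply h2
      have : p.2 ∈ W.1 := by
        have := congrArg Subtype.val hEq
        simp only at this
        rw [← this]; exact Finset.mem_insert_self _ _
      exact this
    · have : insert p.2 (W.1.erase p.1) ∩ W.1 = W.1.erase p.1 := by
        rw [Finset.insert_inter_of_notMem h2,
          Finset.inter_eq_left.mpr (Finset.erase_subset _ _)]
      rw [this, Finset.card_erase_of_mem h1, W.2]
  · intro p hp q hq hEq
    simp only [Finset.mem_filter, Finset.mem_product, Finset.mem_compl] at hp hq
    have hEq' : insert p.2 (W.1.erase p.1) = insert q.2 (W.1.erase q.1) :=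
      congrArg Subtype.val hEq
    have hb : p.2 = q.2 := by
      have : p.2 ∈ insert q.2 (W.1.erase q.1) := hEq' ▸ Finset.mem_insert_self _ _
      rcases Finset.mem_insert.mp this with h | h
      · exact h
      · exact absurd (Finset.erase_subset _ _ h) hp.1.2
    have ha : p.1 = q.1 := by
      by_contra hne
      have h1 : p.1 ∈ insert q.2 (W.1.erase q.1) :=
        Finset.mem_insert_of_mem (Finset.mem_erase.mpr ⟨hne, hp.1.1⟩)
      rw [← hEq'] at h1
      rcases Finset.mem_insert.mp h1 with h | h
      · exact hp.1.2 (h ▸ hp.1.1)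
      · exact (Finset.mem_erase.mp h).1 rfl
    exact Prod.ext ha hb
  · intro S hS
    simp only [Finset.mem_filter, Finset.mem_univ, true_and] at hS
    obtain ⟨hTS, hne, hint⟩ := hS
    have hk1 : 1 ≤ k := by
      by_contra h
      push_neg at h
      interval_cases k
      exact hne (Subtype.ext (by rw [Finset.card_eq_zero.mp S.2, Finset.card_eq_zero.mp W.2]))
    have hWS : (W.1 \ S.1).card = 1 := by
      have h1 := Finset.card_sdiff_add_card_inter W.1 S.1
      rw [Finset.inter_comm] at hint
      rw [hint, W.2] at h1
      omega
    have hSW : (S.1 \ W.1).card = 1 := by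
      have h1 := Finset.card_sdiff_add_card_inter S.1 W.1
      rw [hint, S.2] at h1
      omega
    obtain ⟨a, haEq⟩ := Finset.card_eq_one.mp hWS
    obtain ⟨b, hbEq⟩ := Finset.card_eq_one.mp hSW
    have ha : a ∈ W.1 ∧ a ∉ S.1 := by
      have : a ∈ W.1 \ S.1 := haEq ▸ Finset.mem_singleton_self a
      exact ⟨(Finset.mem_sdiff.mp this).1, (Finset.mem_sdiff.mp this).2⟩
    have hb : b ∈ S.1 ∧ b ∉ W.1 := by
      have : b ∈ S.1 \ W.1 := hbEq ▸ Finset.mem_singleton_self b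
      exact ⟨(Finset.mem_sdiff.mp this).1, (Finset.mem_sdiff.mp this).2⟩
    have hSeq : S.1 = insert b (W.1.erase a) := by
      ext x
      simp only [Finset.mem_insert, Finset.mem_erase]
      constructor
      · intro hx
        by_cases hxW : x ∈ W.1
        · right
          refine ⟨?_, hxW⟩
          rintro rfl; exact ha.2 hx
        · left
          have : x ∈ S.1 \ W.1 := Finset.mem_sdiff.mpr ⟨hx, hxW⟩
          rw [hbEq] at this
          exact Finset.mem_singleton.mp this
      · rintro (rfl | ⟨hxa, hxW⟩)
        · exact hb.1
        · by_contra hxS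
          have : x ∈ W.1 \ S.1 := Finset.mem_sdiff.mpr ⟨hxW, hxS⟩
          rw [haEq] at this
          exact hxa (Finset.mem_singleton.mp this)
    refine ⟨(a, b), ?_, ?_⟩
    · simp only [Finset.mem_filter, Finset.mem_product, Finset.mem_compl]
      exact ⟨⟨ha.1, hb.2⟩, by rw [← hSeq]; exact hTS⟩
    · exact Subtype.ext hSeq.symm

lemma cnt_eq {t : ℕ} (W : {S : Finset (Fin n) // S.card = k}) (T : Finset (Fin n))
    (hT : T.card = t) (htk : t ≤ k) :
    (Finset.univ.filter fun S : {S : Finset (Fin n) // S.card = k} =>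
        T ⊆ S.1 ∧ (johnsonGraph n k).Adj S W).card
      = (if T ⊆ W.1 then (k - t) * (n - k) else 0)
          + (if (T \ W.1).card = 1 then k - t + 1 else 0) := by
  rw [← pair_card_eq]
  by_cases hc : T ⊆ W.1
  · have hc0 : (T \ W.1).card = 0 := by
      rw [Finset.card_eq_zero, Finset.sdiff_eq_empty_iff_subset]; exact hc
    rw [if_pos hc, if_neg (by omega)]
    have hfe : ((W.1 ×ˢ W.1ᶜ).filter fun p => T ⊆ insert p.2 (W.1.erase p.1))
        = (W.1 \ T) ×ˢ W.1ᶜ := by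
      ext p
      simp only [Finset.mem_filter, Finset.mem_product, Finset.mem_compl, Finset.mem_sdiff]
      constructor
      · rintro ⟨⟨h1, h2⟩, h3⟩
        refine ⟨⟨h1, fun hpT => ?_⟩, h2⟩
        rcases Finset.mem_insert.mp (h3 hpT) with h | h
        · exact h2 (h ▸ h1)
        · exact (Finset.mem_erase.mp h).1 rfl
      · rintro ⟨⟨h1, h2⟩, h3⟩
        refine ⟨⟨h1, h3⟩, fun x hx => Finset.mem_insert_of_mem
          (Finset.mem_erase.mpr ⟨fun hxp => h2 (hxp ▸ hx), hc hx⟩)⟩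
    rw [hfe, Finset.card_product, Finset.card_sdiff_of_subset hc, Finset.card_compl, W.2, hT,
      Fintype.card_fin]
    omega
  · rw [if_neg hc]
    by_cases hc1 : (T \ W.1).card = 1
    · rw [if_pos hc1]
      obtain ⟨c, hcEq⟩ := Finset.card_eq_one.mp hc1
      have hcT : c ∈ T ∧ c ∉ W.1 := by
        have : c ∈ T \ W.1 := hcEq ▸ Finset.mem_singleton_self c
        exact ⟨(Finset.mem_sdiff.mp this).1, (Finset.mem_sdiff.mp this).2⟩
      have hfe : ((W.1 ×ˢ W.1ᶜ).filter fun p => T ⊆ insert p.2 (W.1.erase p.1))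
          = (W.1 \ T) ×ˢ ({c} : Finset (Fin n)) := by
        ext p
        simp only [Finset.mem_filter, Finset.mem_product, Finset.mem_compl, Finset.mem_sdiff,
          Finset.mem_singleton]
        constructor
        · rintro ⟨⟨h1, h2⟩, h3⟩
          have hbc : p.2 = c := by
            rcases Finset.mem_insert.mp (h3 hcT.1) with h | h
            · exact h.symm
            · exact absurd ((Finset.erase_subset _ _) h) hcT.2
          refine ⟨⟨h1, fun hpT => ?_⟩, hbc⟩
          rcases Finset.mem_insert.mp (h3 hpT) with h | h
          · exact h2 (h ▸ h1)
          · exact (Finset.mem_erase.mp h).1 rfl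
        · rintro ⟨⟨h1, h2⟩, h3⟩
          refine ⟨⟨h1, h3 ▸ hcT.2⟩, fun x hx => ?_⟩
          by_cases hxW : x ∈ W.1
          · exact Finset.mem_insert_of_mem
              (Finset.mem_erase.mpr ⟨fun hxp => h2 (hxp ▸ hx), hxW⟩)
          · have : x ∈ T \ W.1 := Finset.mem_sdiff.mpr ⟨hx, hxW⟩
            rw [hcEq, Finset.mem_singleton] at this
            exact Finset.mem_insert.mpr (Or.inl (this.trans h3.symm))
      have ht1 : 1 ≤ t := by
        have : c ∈ T := hcT.1
        have := Finset.card_pos.mpr ⟨c, this⟩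
        omega
      have hWT : (W.1 \ T).card = k - t + 1 := by
        have h1 := Finset.card_sdiff_add_card_inter W.1 T
        have h2 := Finset.card_sdiff_add_card_inter T W.1
        rw [hT] at h2
        rw [W.2] at h1
        rw [Finset.inter_comm] at h2
        omega
      rw [hfe, Finset.card_product, hWT, Finset.card_singleton, mul_one]
      omega
    · rw [if_neg hc1]
      have h0 : (T \ W.1).card ≠ 0 := fun h =>
        hc (Finset.sdiff_eq_empty_iff_subset.mp (Finset.card_eq_zero.mp h))
      have h2 : 2 ≤ (T \ W.1).card := by omega
      have hfe : ((W.1 ×ˢ W.1ᶜ).filter fun p => T ⊆ insert p.2 (W.1.erase p.1)) = ∅ := by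
        rw [Finset.filter_eq_empty_iff]
        intro p hp hsub
        simp only [Finset.mem_product, Finset.mem_compl] at hp
        obtain ⟨x, hx, y, hy, hxy⟩ := Finset.one_lt_card.mp h2
        have hxb : x = p.2 := by
          rcases Finset.mem_insert.mp (hsub (Finset.mem_sdiff.mp hx).1) with h | h
          · exact h
          · exact absurd ((Finset.erase_subset _ _) h) (Finset.mem_sdiff.mp hx).2
        have hyb : y = p.2 := by
          rcases Finset.mem_insert.mp (hsub (Finset.mem_sdiff.mp hy).1) with h | h
          · exact h
          · exact absurd ((Finset.erase_subset _ _) h) (Finset.mem_sdiff.mp hy).2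
        exact hxy (hxb.trans hyb.symm)
      rw [hfe]
      simp

lemma degree_eq (W : {S : Finset (Fin n) // S.card = k}) :
    (johnsonGraph n k).degree W = k * (n - k) := by
  have h : (johnsonGraph n k).neighborFinset W
      = Finset.univ.filter fun S : {S : Finset (Fin n) // S.card = k} =>
          (∅ : Finset (Fin n)) ⊆ S.1 ∧ (johnsonGraph n k).Adj S W := by
    rw [SimpleGraph.neighborFinset_eq_filter]
    ext S
    simp [SimpleGraph.adj_comm]
  rw [SimpleGraph.degree, h, cnt_eq (t := 0) W ∅ (Finset.card_empty) (Nat.zero_le k)]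
  simp

lemma erase_cnt_eq {t : ℕ} (W : {S : Finset (Fin n) // S.card = k}) (T : Finset (Fin n))
    (hT : T.card = t) :
    (T.filter fun i => T.erase i ⊆ W.1).card
      = (if T ⊆ W.1 then t else 0) + (if (T \ W.1).card = 1 then 1 else 0) := by
  by_cases hc : T ⊆ W.1
  · have hc0 : (T \ W.1).card = 0 := by
      rw [Finset.card_eq_zero, Finset.sdiff_eq_empty_iff_subset]; exact hc
    rw [if_pos hc, if_neg (by omega), Finset.filter_true_of_mem
      (fun i _ => ((Finset.erase_subset _ _).trans hc)), hT]
    omega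
  · rw [if_neg hc]
    by_cases hc1 : (T \ W.1).card = 1
    · rw [if_pos hc1]
      obtain ⟨c, hcEq⟩ := Finset.card_eq_one.mp hc1
      have hcT : c ∈ T ∧ c ∉ W.1 := by
        have : c ∈ T \ W.1 := hcEq ▸ Finset.mem_singleton_self c
        exact ⟨(Finset.mem_sdiff.mp this).1, (Finset.mem_sdiff.mp this).2⟩
      have hfe : (T.filter fun i => T.erase i ⊆ W.1) = {c} := by
        ext i
        simp only [Finset.mem_filter, Finset.mem_singleton]
        constructor
        · rintro ⟨hiT, hsub⟩
          by_contra hne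
          exact hcT.2 (hsub (Finset.mem_erase.mpr ⟨fun h => hne h.symm, hcT.1⟩))
        · rintro rfl
          refine ⟨hcT.1, fun x hx => ?_⟩
          obtain ⟨hxc, hxT⟩ := Finset.mem_erase.mp hx
          by_contra hxW
          have : x ∈ T \ W.1 := Finset.mem_sdiff.mpr ⟨hxT, hxW⟩
          rw [hcEq, Finset.mem_singleton] at this
          exact hxc this
      rw [hfe, Finset.card_singleton]
    · rw [if_neg hc1]
      have h0 : (T \ W.1).card ≠ 0 := fun h =>
        hc (Finset.sdiff_eq_empty_iff_subset.mp (Finset.card_eq_zero.mp h))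
      have h2 : 2 ≤ (T \ W.1).card := by omega
      have hfe : (T.filter fun i => T.erase i ⊆ W.1) = ∅ := by
        rw [Finset.filter_eq_empty_iff]
        intro i hi hsub
        obtain ⟨x, hx, y, hy, hxy⟩ := Finset.one_lt_card.mp h2
        have hxi : x = i := by
          by_contra hne
          exact (Finset.mem_sdiff.mp hx).2
            (hsub (Finset.mem_erase.mpr ⟨hne, (Finset.mem_sdiff.mp hx).1⟩))
        have hyi : y = i := by
          by_contra hne
          exact (Finset.mem_sdiff.mp hy).2
            (hsub (Finset.mem_erase.mpr ⟨hne, (Finset.mem_sdiff.mp hy).1⟩))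
        exact hxy (hxi.trans hyi.symm)
      rw [hfe]
      simp

lemma swap_sum {α β : Type*} [Fintype β] [DecidableEq β] (A : Finset α)
    (P : α → β → Prop) [∀ a b, Decidable (P a b)] (f : β → ℝ) :
    ∑ a ∈ A, ∑ b ∈ Finset.univ.filter (P a ·), f b
      = ∑ b : β, ((A.filter fun a => P a b).card : ℝ) * f b := by
  simp_rw [Finset.sum_filter]
  rw [Finset.sum_comm]
  refine Finset.sum_congr rfl fun b _ => ?_
  rw [← Finset.sum_filter, Finset.sum_const, nsmul_eq_mul]

lemma key (n k : ℕ) (hkn : 2 * k ≤ n) (μ : ℝ)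
    (φ : {S : Finset (Fin n) // S.card = k} → ℝ)
    (hφ : (johnsonGraph n k).lapMatrix ℝ *ᵥ φ = μ • φ) :
    ∀ t : ℕ, t ≤ k → ∀ T : Finset (Fin n), T.card = t →
      (t : ℝ) * ((n : ℝ) + 1 - (t : ℝ)) < μ →
      ∑ S ∈ Finset.univ.filter (fun S : {S : Finset (Fin n) // S.card = k} => T ⊆ S.1),
        φ S = 0 := by
  intro t
  induction t using Nat.strong_induction_on with
  | _ t ih =>
  intro htk T hT hμ
  have hkn' : k ≤ n := by omega
  set D := Finset.univ.filter
    (fun S : {S : Finset (Fin n) // S.card = k} => T ⊆ S.1) with hD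
  set Sig := ∑ S ∈ D, φ S with hSig
  set M := ∑ W ∈ Finset.univ.filter
    (fun W : {S : Finset (Fin n) // S.card = k} => (T \ W.1).card = 1), φ W with hM
  -- induction hypothesis applied to erased sets
  have hIH : ∀ i ∈ T, ∑ S ∈ Finset.univ.filter
      (fun S : {S : Finset (Fin n) // S.card = k} => T.erase i ⊆ S.1), φ S = 0 := by
    intro i hi
    have ht1 : 1 ≤ t := hT ▸ Finset.card_pos.mpr ⟨i, hi⟩
    have hcard : (T.erase i).card = t - 1 := by rw [Finset.card_erase_of_mem hi, hT]
    refine ih (t - 1) (by omega) (by omega) _ hcard ?_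
    have hcast : ((t - 1 : ℕ) : ℝ) = (t : ℝ) - 1 := by
      rw [Nat.cast_sub ht1, Nat.cast_one]
    rw [hcast]
    have h2t : (2 * (t : ℝ)) ≤ n := by
      have h : (2 * t : ℕ) ≤ n := by omega
      exact_mod_cast h
    nlinarith [hμ]
  -- step 1: sum of eigen-equation over D
  have h1 : ∑ S ∈ D, ((johnsonGraph n k).lapMatrix ℝ *ᵥ φ) S = μ * Sig := by
    rw [hφ]
    simp only [Pi.smul_apply, smul_eq_mul]
    rw [← Finset.mul_sum]
  have h2 : ∑ S ∈ D, ((johnsonGraph n k).lapMatrix ℝ *ᵥ φ) S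
      = ((k * (n - k) : ℕ) : ℝ) * Sig
        - ∑ S ∈ D, ∑ u ∈ (johnsonGraph n k).neighborFinset S, φ u := by
    simp_rw [SimpleGraph.lapMatrix_mulVec_apply, degree_eq]
    rw [Finset.sum_sub_distrib, ← Finset.mul_sum]
  -- step 2: neighbor double sum
  have hA : ∑ S ∈ D, ∑ u ∈ (johnsonGraph n k).neighborFinset S, φ u
      = (((k - t) * (n - k) : ℕ) : ℝ) * Sig + ((k - t + 1 : ℕ) : ℝ) * M := by
    simp_rw [SimpleGraph.neighborFinset_eq_filter]
    rw [swap_sum D (fun S W => (johnsonGraph n k).Adj S W) φ]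
    have hterm : ∀ W : {S : Finset (Fin n) // S.card = k},
        ((D.filter fun S => (johnsonGraph n k).Adj S W).card : ℝ) * φ W
          = (if T ⊆ W.1 then (((k - t) * (n - k) : ℕ) : ℝ) * φ W else 0)
            + (if (T \ W.1).card = 1 then ((k - t + 1 : ℕ) : ℝ) * φ W else 0) := by
      intro W
      rw [hD, Finset.filter_filter, cnt_eq W T hT htk]
      by_cases hx : T ⊆ W.1 <;> by_cases hy : (T \ W.1).card = 1 <;>
        simp [hx, hy] <;> push_cast <;> ring
    rw [Finset.sum_congr rfl fun W _ => hterm W, Finset.sum_add_distrib,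
      ← Finset.sum_filter, ← Finset.sum_filter, ← Finset.mul_sum, ← Finset.mul_sum]
  -- step 3: the erased sums give M = -t * Sig
  have hMe : (t : ℝ) * Sig + M = 0 := by
    have h0 : ∑ i ∈ T, ∑ S ∈ Finset.univ.filter
        (fun S : {S : Finset (Fin n) // S.card = k} => T.erase i ⊆ S.1), φ S = 0 :=
      Finset.sum_eq_zero hIH
    rw [swap_sum T (fun i W => T.erase i ⊆ W.1) φ] at h0
    have hterm : ∀ W : {S : Finset (Fin n) // S.card = k},
        ((T.filter fun i => T.erase i ⊆ W.1).card : ℝ) * φ W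
          = (if T ⊆ W.1 then (t : ℝ) * φ W else 0)
            + (if (T \ W.1).card = 1 then φ W else 0) := by
      intro W
      rw [erase_cnt_eq W T hT]
      by_cases hx : T ⊆ W.1 <;> by_cases hy : (T \ W.1).card = 1 <;>
        simp [hx, hy] <;> push_cast <;> ring
    rw [Finset.sum_congr rfl fun W _ => hterm W, Finset.sum_add_distrib,
      ← Finset.sum_filter, ← Finset.sum_filter, ← Finset.mul_sum] at h0
    exact h0
  -- combine
  have hEq : μ * Sig = ((k * (n - k) : ℕ) : ℝ) * Sig
      - ((((k - t) * (n - k) : ℕ) : ℝ) * Sig + ((k - t + 1 : ℕ) : ℝ) * M) := by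
    rw [← h1, h2, hA]
  have hc1 : ((k * (n - k) : ℕ) : ℝ) = (k : ℝ) * ((n : ℝ) - k) := by
    push_cast [Nat.cast_sub hkn']; ring
  have hc2 : (((k - t) * (n - k) : ℕ) : ℝ) = ((k : ℝ) - t) * ((n : ℝ) - k) := by
    push_cast [Nat.cast_sub hkn', Nat.cast_sub htk]; ring
  have hc3 : ((k - t + 1 : ℕ) : ℝ) = (k : ℝ) - t + 1 := by
    push_cast [Nat.cast_sub htk]; ring
  rw [hc1, hc2, hc3] at hEq
  have hzero : (μ - (t : ℝ) * ((n : ℝ) + 1 - (t : ℝ))) * Sig = 0 := by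
    linear_combination hEq - ((k : ℝ) - t + 1) * hMe
  rcases mul_eq_zero.mp hzero with h | h
  · exact absurd h (sub_ne_zero_of_ne (ne_of_gt hμ))
  · exact h

end EKRAux

/-- For a fixed `t`-element set `T ⊆ {1,…,n}`, the family `D_T` of all `k`-element
subsets containing `T` (the Erdős–Ko–Rado extremizer) averages every Laplacian
eigenvector of the Johnson graph `J(n,k)` whose eigenvalue exceeds `t(n+1−t)`. -/
theorem ekr_extremizer_is_reverse_design
    (n k t : ℕ) (ht1 : 1 ≤ t) (htk : t < k) (hkn : 2 * k ≤ n)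
    (T : Finset (Fin n)) (hT : T.card = t) :
    ∀ μ : ℝ, (t : ℝ) * ((n : ℝ) + 1 - (t : ℝ)) < μ →
      ∀ φ : {S : Finset (Fin n) // S.card = k} → ℝ,
        (johnsonGraph n k).lapMatrix ℝ *ᵥ φ = μ • φ →
        ∑ S ∈ Finset.univ.filter (fun S : {S : Finset (Fin n) // S.card = k} => T ⊆ S.1),
          φ S = 0 := by
  intro μ hμ φ hφ
  exact EKRAux.key n k hkn μ φ hφ t (le_of_lt htk) T hT hμ
end

section
/- For every n ≥ 6 there exist partitions p and q of n — i.e. nonincreasing finite sequences p₁ ≥ p₂ ≥ … ≥ p_r ≥ 1 and q₁ ≥ q₂ ≥ … ≥ q_s ≥ 1 of positive integers with ∑_{i=1}^r p_i = ∑_{j=1}^s q_j = n — such that p₁ > q₁ and ∑_{i=1}^r p_i(p_i − 2i + 1) ≤ ∑_{j=1}^s q_j(q_j − 2j + 1). Equivalently, writing λ_p = C(n,2) − ½∑_i p_i(p_i − 2i + 1) for the Laplacian eigenvalue of the transposition graph on the eigenspace indexed by p, there exist p, q with p₁ > q₁ but λ_p ≥ λ_q, so the first part order on partitions does not agree with the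 Laplacian order of the transposition graph. -/
open Finset

private lemma auxS (t : ℕ) : ∑ i : Fin t, ((1:ℤ) * ((1:ℤ) - 2 * (((i:ℤ) + 1) + 1) + 1)) = -(t*t) - t := by
  induction t with
  | zero => simp
  | succ t ih =>
    rw [Fin.sum_univ_castSucc]
    simp only [Fin.coe_castSucc, Fin.val_last] at *
    rw [ih]; push_cast; ring

private lemma auxNat (t c : ℕ) :
    ∑ i : Fin (t+1), (if i = 0 then c + 1 else 1) = c + 1 + t := by
  rw [Fin.sum_univ_succ]
  simp [Fin.succ_ne_zero]

private lemma auxInt (t c : ℕ) :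
    ∑ i : Fin (t+1), (((if i = 0 then c + 1 else 1 : ℕ) : ℤ) *
      (((if i = 0 then c + 1 else 1 : ℕ) : ℤ) - 2 * ((i : ℤ) + 1) + 1)) =
      (c + 1) * c - (t * t + t) := by
  rw [Fin.sum_univ_succ]
  simp only [if_pos rfl, Fin.succ_ne_zero, if_neg, Fin.val_succ, Fin.val_zero]
  push_cast
  rw [show (∑ i : Fin t, ((1:ℤ) * ((1:ℤ) - 2 * (((i:ℤ) + 1) + 1) + 1))) = -(t*t) - t from auxS t]
  ring

/-- For every `n ≥ 6` there are partitions `p, q ⊢ n` (written as nonincreasing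
sequences of positive integers `p 0 ≥ p 1 ≥ … ` summing to `n`) with `p₁ > q₁` but
`∑ᵢ pᵢ(pᵢ − 2i + 1) ≤ ∑ⱼ qⱼ(qⱼ − 2j + 1)` (indices starting at 1), i.e.
`λ_p ≥ λ_q` for the Laplacian eigenvalues
`λ_p = C(n,2) − ½·∑ᵢ pᵢ(pᵢ − 2i + 1)` of the transposition graph: the first part
order on partitions does not agree with the Laplacian order. -/
theorem first_part_order_ne_laplacian_order (n : ℕ) (hn : 6 ≤ n) :
    ∃ (r s : ℕ) (hr : 0 < r) (hs : 0 < s) (p : Fin r → ℕ) (q : Fin s → ℕ),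
      (∀ i j : Fin r, i ≤ j → p j ≤ p i) ∧ (∀ i, 1 ≤ p i) ∧ (∑ i, p i = n) ∧
      (∀ i j : Fin s, i ≤ j → q j ≤ q i) ∧ (∀ j, 1 ≤ q j) ∧ (∑ j, q j = n) ∧
      q ⟨0, hs⟩ < p ⟨0, hr⟩ ∧
      (∑ i : Fin r, (p i : ℤ) * ((p i : ℤ) - 2 * ((i : ℤ) + 1) + 1)) ≤
        (∑ j : Fin s, (q j : ℤ) * ((q j : ℤ) - 2 * ((j : ℤ) + 1) + 1)) := by
  rcases Nat.even_or_odd n with ⟨m, hm⟩ | ⟨m, hm⟩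
  · obtain ⟨t, rfl⟩ : ∃ t, m = t + 1 := ⟨m - 1, by omega⟩
    have ht : 2 ≤ t := by omega
    refine ⟨t + 1, 2, Nat.succ_pos _, by norm_num,
      fun i => if i = 0 then (t + 1) + 1 else 1, ![t + 1, t + 1], ?_, ?_, ?_, ?_, ?_, ?_, ?_, ?_⟩
    · intro i j hij
      by_cases hj : j = 0
      · have hi : i = 0 := le_antisymm (hj ▸ hij) (Fin.zero_le i)
        simp [hi, hj]
      · simp only [if_neg hj]
        split_ifs <;> omega
    · intro i; dsimp only; split_ifs <;> omega
    · rw [auxNat]; omega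
    · intro i j hij; fin_cases i <;> fin_cases j <;> simp
    · intro j; fin_cases j <;> simp
    · rw [Fin.sum_univ_two]; simp; omega
    · simp [show (⟨0, Nat.succ_pos t⟩ : Fin (t+1)) = 0 from rfl]
    · rw [auxInt, Fin.sum_univ_two]
      norm_num [Matrix.cons_val_zero, Matrix.cons_val_one, Matrix.head_cons]
      nlinarith [ht, sq_nonneg ((t:ℤ) - 2)]
  · have hm3 : 3 ≤ m := by omega
    refine ⟨m + 1, 3, Nat.succ_pos _, by norm_num,
      fun i => if i = 0 then m + 1 else 1, ![m, m, 1], ?_, ?_, ?_, ?_, ?_, ?_, ?_, ?_⟩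
    · intro i j hij
      by_cases hj : j = 0
      · have hi : i = 0 := le_antisymm (hj ▸ hij) (Fin.zero_le i)
        simp [hi, hj]
      · simp only [if_neg hj]
        split_ifs <;> omega
    · intro i; dsimp only; split_ifs <;> omega
    · rw [auxNat]; omega
    · intro i j hij
      fin_cases i <;> fin_cases j <;>
        simp_all [Matrix.cons_val_zero, Matrix.cons_val_one, Matrix.head_cons, Fin.mk_le_mk] <;>
        omega
    · intro j
      fin_cases j <;>
        simp [Matrix.cons_val_zero, Matrix.cons_val_one, Matrix.head_cons] <;> omega
    · rw [Fin.sum_univ_three]; simp; omega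
    · simp [show (⟨0, Nat.succ_pos m⟩ : Fin (m+1)) = 0 from rfl]
    · rw [auxInt, Fin.sum_univ_three]
      norm_num [Matrix.cons_val_zero, Matrix.cons_val_one, Matrix.head_cons, Matrix.cons_val_two, Matrix.tail_cons]
      nlinarith [hm3, sq_nonneg ((m:ℤ) - 3)]
end

section
/- Let G be a finite simple graph on vertex set V with adjacency matrix A, and let x : V → ℝ satisfy A x = μ x and ∑_{v∈V} x(v) = 0. Let B be the adjacency matrix of the Mycielskian M(G), and define z : V ⊔ V' ⊔ {u} → ℝ by z(v) = x(v) for v ∈ V, z(v') = −φ̄·x(v) for v' ∈ V', and z(u) = 0. Then B z = (φμ)·z. Likewise the vector z' defined by z'(v) = x(v), z'(v') = −φ·x(v), z'(u) = 0 satisfies B z' = (φ̄μ)·z'. Moreover both z and z' are orthogonal to the all-ones vector on V(M(G)). -/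
open Finset Matrix


variable {V : Type*}

/-- Adjacency relation of the Mycielskian of `G`: vertex set `V ⊔ V' ⊔ {u}`,
with `v ~ w` for edges `vw` of `G`, `v ~ w'` and `v' ~ w` for edges `vw` of `G`,
and `u ~ v'` for every `v`. -/
def mycAdj (G : SimpleGraph V) : V ⊕ V ⊕ Unit → V ⊕ V ⊕ Unit → Prop
  | Sum.inl v, Sum.inl w => G.Adj v w
  | Sum.inl v, Sum.inr (Sum.inl w) => G.Adj v w
  | Sum.inr (Sum.inl v), Sum.inl w => G.Adj v w
  | Sum.inr (Sum.inl _), Sum.inr (Sum.inr _) => True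
  | Sum.inr (Sum.inr _), Sum.inr (Sum.inl _) => True
  | _, _ => False

/-- The Mycielskian of a simple graph `G`. -/
def mycielskian (G : SimpleGraph V) : SimpleGraph (V ⊕ V ⊕ Unit) where
  Adj := mycAdj G
  symm := ⟨by
    rintro (v | v | v) (w | w | w) h <;> simp only [mycAdj] at h ⊢ <;>
      first
        | exact G.adj_symm h
        | exact h
        | trivial⟩
  loopless := ⟨by
    rintro (v | v | v) h <;> simp only [mycAdj] at h <;>
      first
        | exact G.loopless.irrefl v h
        | exact h⟩

instance (G : SimpleGraph V) [DecidableRel G.Adj] : DecidableRel (mycielskian G).Adj :=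
  fun a b =>
    match a, b with
    | Sum.inl v, Sum.inl w => inferInstanceAs (Decidable (G.Adj v w))
    | Sum.inl v, Sum.inr (Sum.inl w) => inferInstanceAs (Decidable (G.Adj v w))
    | Sum.inl _, Sum.inr (Sum.inr _) => inferInstanceAs (Decidable False)
    | Sum.inr (Sum.inl v), Sum.inl w => inferInstanceAs (Decidable (G.Adj v w))
    | Sum.inr (Sum.inl _), Sum.inr (Sum.inl _) => inferInstanceAs (Decidable False)
    | Sum.inr (Sum.inl _), Sum.inr (Sum.inr _) => inferInstanceAs (Decidable True)
    | Sum.inr (Sum.inr _), Sum.inl _ => inferInstanceAs (Decidable False)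
    | Sum.inr (Sum.inr _), Sum.inr (Sum.inl _) => inferInstanceAs (Decidable True)
    | Sum.inr (Sum.inr _), Sum.inr (Sum.inr _) => inferInstanceAs (Decidable False)

section
variable (G : SimpleGraph V) (v w : V) (p q : Unit)
lemma myc_adj_ll : (mycielskian G).Adj (Sum.inl v) (Sum.inl w) ↔ G.Adj v w := Iff.rfl
lemma myc_adj_lm : (mycielskian G).Adj (Sum.inl v) (Sum.inr (Sum.inl w)) ↔ G.Adj v w := Iff.rfl
lemma myc_adj_lr : (mycielskian G).Adj (Sum.inl v) (Sum.inr (Sum.inr p)) ↔ False := Iff.rfl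
lemma myc_adj_ml : (mycielskian G).Adj (Sum.inr (Sum.inl v)) (Sum.inl w) ↔ G.Adj v w := Iff.rfl
lemma myc_adj_mm : (mycielskian G).Adj (Sum.inr (Sum.inl v)) (Sum.inr (Sum.inl w)) ↔ False :=
  Iff.rfl
lemma myc_adj_mr : (mycielskian G).Adj (Sum.inr (Sum.inl v)) (Sum.inr (Sum.inr p)) ↔ True :=
  Iff.rfl
lemma myc_adj_rl : (mycielskian G).Adj (Sum.inr (Sum.inr p)) (Sum.inl w) ↔ False := Iff.rfl
lemma myc_adj_rm : (mycielskian G).Adj (Sum.inr (Sum.inr p)) (Sum.inr (Sum.inl w)) ↔ True :=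
  Iff.rfl
lemma myc_adj_rr : (mycielskian G).Adj (Sum.inr (Sum.inr p)) (Sum.inr (Sum.inr q)) ↔ False :=
  Iff.rfl
end

lemma myc_eig {V : Type*} [Fintype V] [DecidableEq V] (G : SimpleGraph V) [DecidableRel G.Adj]
    (μ a b : ℝ) (hab : a * b = -1) (hadd : a + b = 1)
    (x : V → ℝ) (hx : G.adjMatrix ℝ *ᵥ x = μ • x) (hsum : ∑ v, x v = 0) :
    (mycielskian G).adjMatrix ℝ *ᵥ (Sum.elim x (Sum.elim (fun v => -b * x v) fun _ => 0))
      = (a * μ) • (Sum.elim x (Sum.elim (fun v => -b * x v) fun _ => 0)) := by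
  have hmu : ∀ v, ∑ w, (if G.Adj v w then (1:ℝ) else 0) * x w = μ * x v := by
    intro v
    have := congrFun hx v
    simpa [Matrix.mulVec, dotProduct, SimpleGraph.adjMatrix_apply] using this
  funext c
  simp only [Matrix.mulVec, dotProduct, SimpleGraph.adjMatrix_apply]
  rcases c with v | v | u
  · simp only [Matrix.mulVec, dotProduct, SimpleGraph.adjMatrix_apply,
      Fintype.sum_sum_type, Pi.smul_apply, Sum.elim_inl, Sum.elim_inr, smul_eq_mul,
      myc_adj_ll, myc_adj_lm, myc_adj_lr, myc_adj_ml, myc_adj_mm, myc_adj_mr, myc_adj_rl,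
      myc_adj_rm, myc_adj_rr, if_false, mul_zero, Finset.sum_const_zero, add_zero]
    simp_rw [mul_left_comm _ (-b), ← Finset.mul_sum, hmu]
    linear_combination (-(μ * x v)) * hadd
  · simp only [Matrix.mulVec, dotProduct, SimpleGraph.adjMatrix_apply,
      Fintype.sum_sum_type, Pi.smul_apply, Sum.elim_inl, Sum.elim_inr, smul_eq_mul,
      myc_adj_ll, myc_adj_lm, myc_adj_lr, myc_adj_ml, myc_adj_mm, myc_adj_mr, myc_adj_rl,
      myc_adj_rm, myc_adj_rr, if_false, if_true, mul_zero, zero_mul, Finset.sum_const_zero,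
      add_zero, one_mul]
    rw [hmu v]
    linear_combination (μ * x v) * hab
  · simp only [Matrix.mulVec, dotProduct, SimpleGraph.adjMatrix_apply,
      Fintype.sum_sum_type, Pi.smul_apply, Sum.elim_inl, Sum.elim_inr, smul_eq_mul,
      myc_adj_ll, myc_adj_lm, myc_adj_lr, myc_adj_ml, myc_adj_mm, myc_adj_mr, myc_adj_rl,
      myc_adj_rm, myc_adj_rr, if_false, if_true, mul_zero, zero_mul, Finset.sum_const_zero,
      one_mul, add_zero, zero_add]
    simp_rw [← Finset.mul_sum, hsum, mul_zero]

/-- If `x` is an eigenvector of `A(G)` with eigenvalue `μ` summing to zero, then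
`z = (x, −φ̄x, 0)` and `z' = (x, −φx, 0)` are eigenvectors of the adjacency matrix of
the Mycielskian `M(G)` with eigenvalues `φμ` and `φ̄μ` respectively (where
`φ = (1+√5)/2` and `φ̄ = (1−√5)/2` are the roots of `x² − x − 1`), and both are
orthogonal to the all-ones vector. -/
theorem mycielskian_eigenvectors
    {V : Type*} [Fintype V] [DecidableEq V] (G : SimpleGraph V) [DecidableRel G.Adj]
    (μ : ℝ) (x : V → ℝ)
    (hx : G.adjMatrix ℝ *ᵥ x = μ • x) (hsum : ∑ v, x v = 0)
    (z z' : V ⊕ V ⊕ Unit → ℝ)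
    (hz : z = Sum.elim x (Sum.elim (fun v => -Real.goldenConj * x v) fun _ => 0))
    (hz' : z' = Sum.elim x (Sum.elim (fun v => -Real.goldenRatio * x v) fun _ => 0)) :
    (mycielskian G).adjMatrix ℝ *ᵥ z = (Real.goldenRatio * μ) • z ∧
    (mycielskian G).adjMatrix ℝ *ᵥ z' = (Real.goldenConj * μ) • z' ∧
    ∑ w, z w * 1 = 0 ∧ ∑ w, z' w * 1 = 0 := by
  subst hz hz'
  refine ⟨myc_eig G μ Real.goldenRatio Real.goldenConj Real.goldenRatio_mul_goldenConj Real.goldenRatio_add_goldenConj x hx hsum,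
    myc_eig G μ Real.goldenConj Real.goldenRatio (by rw [mul_comm]; exact Real.goldenRatio_mul_goldenConj)
      (by rw [add_comm]; exact Real.goldenRatio_add_goldenConj) x hx hsum, ?_, ?_⟩ <;>
  · simp only [Fintype.sum_sum_type, Sum.elim_inl, Sum.elim_inr, mul_one,
      Finset.sum_const_zero, add_zero, zero_mul]
    simp_rw [← Finset.mul_sum, hsum, mul_zero, add_zero]
end
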